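/- For all α > 0 and Δ > 0, ∫₀^{1/(1+Δ)} (α^α / Γ(α)) · e^{-α/u} / u^{1+α} du = ∫_Δ^∞ (α^α e^{-α} / Γ(α)) · (1/(1+s)) · e^{-α(s - log(1+s))} ds, and this is bounded above by ∫₁^∞ α^{1/2} Δ exp(-(t²/4)(α^{1/2} Δ)²) dt + ∫₁^∞ (αΔ)^{1/2} exp(-(t/4) αΔ) dt. -/

import Mathlib

open MeasureTheory
open Real Set


lemma quad_exp_nonpos {x : ℝ} (hx : x ≤ 0) : Real.exp x ≤ 1 + x + x^2/2 := by
  have h : Antitone (fun y : ℝ => 1 + y + y^2/2 - Real.exp y) := by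
    apply antitone_of_deriv_nonpos (by fun_prop)
    intro y
    have h1 : HasDerivAt (fun y : ℝ => 1 + y + y^2/2 - Real.exp y)
        (0 + 1 + ((2:ℕ)*y^(2-1))/2 - Real.exp y) y := by
      exact (((hasDerivAt_const y (1:ℝ)).add (hasDerivAt_id y)).add
        ((hasDerivAt_pow 2 y).div_const 2)).sub (Real.hasDerivAt_exp y)
    rw [h1.deriv]
    have := Real.add_one_le_exp y
    push_cast
    norm_num
    linarith
  have h0 := h hx
  simp only [Real.exp_zero] at h0
  norm_num at h0
  linarith

lemma gamma_int (α : ℝ) (hα : 0 < α) :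
    IntegrableOn (fun u : ℝ => Real.exp (-(α*u)) * u ^ (α-1)) (Set.Ioi 0) := by
  have h := (integrableOn_Ioi_comp_mul_left_iff
    (fun x : ℝ => Real.exp (-x) * x ^ (α-1)) 0 hα).mpr
    (by simpa using Real.GammaIntegral_convergent hα)
  refine IntegrableOn.congr_fun (h.const_mul (α ^ ((1:ℝ)-α))) ?_ measurableSet_Ioi
  intro u hu
  simp only
  rw [Real.mul_rpow hα.le (le_of_lt hu)]
  have h2 : α ^ ((1:ℝ)-α) * α ^ (α-1) = 1 := by
    rw [← Real.rpow_add hα]; norm_num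
  linear_combination (Real.exp (-(α*u)) * u^(α-1)) * h2

lemma gamma_eq (α : ℝ) (hα : 0 < α) :
    Real.Gamma α = α ^ α * ∫ u in Set.Ioi (0:ℝ), Real.exp (-(α*u)) * u ^ (α-1) := by
  rw [Real.Gamma_eq_integral hα]
  have h := integral_comp_mul_left_Ioi (fun x : ℝ => Real.exp (-x) * x ^ (α-1)) 0 hα
  rw [mul_zero] at h
  simp only [smul_eq_mul] at h
  have h2 : ∫ (x : ℝ) in Ioi 0, Real.exp (-(α * x)) * (α * x) ^ (α - 1)
      = α^(α-1) * ∫ u in Set.Ioi (0:ℝ), Real.exp (-(α*u)) * u ^ (α-1) := by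
    rw [← MeasureTheory.integral_const_mul]
    refine setIntegral_congr_fun measurableSet_Ioi ?_
    intro u hu
    simp only
    rw [Real.mul_rpow hα.le (le_of_lt hu)]
    ring
  rw [h2] at h
  have := congrArg (fun z => α * z) h
  rw [← mul_assoc α α⁻¹, mul_inv_cancel₀ hα.ne', one_mul] at this
  rw [← this, ← mul_assoc]
  congr 1
  nth_rewrite 1 [← Real.rpow_one α]
  rw [← Real.rpow_add hα]
  norm_num

lemma aux_exp_mul_int (α : ℝ) (hα : 0 < α) :
    MeasureTheory.IntegrableOn (fun x : ℝ => Real.exp (α * x)) (Set.Iio 0) := by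
  have h1 : MeasureTheory.Integrable ((Set.Ioi (0:ℝ)).indicator (fun x => Real.exp (-α*x))) :=
    (MeasureTheory.integrable_indicator_iff measurableSet_Ioi).2 (exp_neg_integrableOn_Ioi 0 hα)
  have h2 := h1.comp_neg
  have h3 : (fun x : ℝ => (Set.Ioi (0:ℝ)).indicator (fun x => Real.exp (-α*x)) (-x))
      = (Set.Iio (0:ℝ)).indicator (fun x => Real.exp (α*x)) := by
    ext x
    by_cases hx : x < 0 <;>
      simp [Set.indicator, Set.mem_Ioi, Set.mem_Iio, hx, not_lt.2, neg_pos, mul_comm]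
  rw [h3] at h2
  exact (MeasureTheory.integrable_indicator_iff measurableSet_Iio).1 h2

lemma aux_exp_image : Real.exp '' (Set.Iio 0) = Set.Ioo 0 1 := by
  ext u
  constructor
  · rintro ⟨x, hx, rfl⟩
    exact ⟨Real.exp_pos x, Real.exp_lt_one_iff.2 hx⟩
  · rintro ⟨h0, h1⟩
    exact ⟨Real.log u, Real.log_neg h0 h1, Real.exp_log h0⟩

lemma int_lb (α : ℝ) (hα : 0 < α) :
    Real.exp (-α) * (Real.sqrt (π / (α/2)) / 2)
      ≤ ∫ u in Set.Ioi (0:ℝ), Real.exp (-(α*u)) * u ^ (α-1) := by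
  have step1 : ∫ u in Set.Ioo (0:ℝ) 1, Real.exp (-(α*u)) * u ^ (α-1)
      ≤ ∫ u in Set.Ioi (0:ℝ), Real.exp (-(α*u)) * u ^ (α-1) := by
    apply setIntegral_mono_set (gamma_int α hα)
    · filter_upwards [ae_restrict_mem measurableSet_Ioi] with u hu
      exact mul_nonneg (Real.exp_pos _).le (Real.rpow_nonneg (le_of_lt hu) _)
    · exact HasSubset.Subset.eventuallyLE Set.Ioo_subset_Ioi_self
  refine le_trans ?_ step1
  -- change of variables u = exp x
  have step2 : ∫ u in Set.Ioo (0:ℝ) 1, Real.exp (-(α*u)) * u ^ (α-1)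
      = ∫ x in Set.Iio (0:ℝ), Real.exp (α * x - α * Real.exp x) := by
    rw [← aux_exp_image,
      integral_image_eq_integral_abs_deriv_smul measurableSet_Iio
        (fun x _ => (Real.hasDerivAt_exp x).hasDerivWithinAt)
        (Real.exp_injective.injOn) _]
    refine setIntegral_congr_fun measurableSet_Iio fun x _ => ?_
    rw [abs_of_pos (Real.exp_pos x), smul_eq_mul,
      Real.rpow_def_of_pos (Real.exp_pos x), Real.log_exp, ← Real.exp_add, ← Real.exp_add]
    ring_nf
  rw [step2]
  have step3 : ∫ x in Set.Iio (0:ℝ), Real.exp (-α) * Real.exp (-(α/2) * x^2)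
      ≤ ∫ x in Set.Iio (0:ℝ), Real.exp (α * x - α * Real.exp x) := by
    apply setIntegral_mono_on
    · exact ((integrable_exp_neg_mul_sq (half_pos hα)).const_mul _).integrableOn
    · apply Integrable.mono (aux_exp_mul_int α hα)
      · exact (Continuous.aestronglyMeasurable (by fun_prop))
      · filter_upwards [ae_restrict_mem measurableSet_Iio] with x hx
        rw [norm_of_nonneg (Real.exp_pos _).le, norm_of_nonneg (Real.exp_pos _).le,
          Real.exp_le_exp]
        nlinarith [Real.exp_pos x, hα]
    · exact measurableSet_Iio
    · intro x hx
      rw [← Real.exp_add, Real.exp_le_exp]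
      have h := quad_exp_nonpos (le_of_lt hx)
      nlinarith [hα]
  refine le_trans ?_ step3
  rw [MeasureTheory.integral_const_mul]
  have step4 : ∫ x in Set.Iio (0:ℝ), Real.exp (-(α/2) * x^2)
      = Real.sqrt (π / (α/2)) / 2 := by
    have hs := integral_comp_neg_Ioi (c := 0) (f := fun t : ℝ => Real.exp (-(α/2) * t^2))
    rw [neg_zero] at hs
    simp only [neg_sq] at hs
    rw [← MeasureTheory.integral_Iic_eq_integral_Iio, ← hs, integral_gaussian_Ioi]
  rw [step4]

lemma gamma_lb (α : ℝ) (hα : 0 < α) :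
    α ^ α * Real.exp (-α) ≤ α ^ ((1:ℝ)/2) * Real.Gamma α := by
  have hpow : (0:ℝ) < α ^ α := Real.rpow_pos_of_pos hα α
  have hhalf : (0:ℝ) < α ^ ((1:ℝ)/2) := Real.rpow_pos_of_pos hα _
  have key : 1 ≤ α ^ ((1:ℝ)/2) * (Real.sqrt (π/(α/2)) / 2) := by
    rw [← Real.sqrt_eq_rpow]
    have h1 : Real.sqrt α * Real.sqrt (π/(α/2)) = Real.sqrt (2*π) := by
      rw [← Real.sqrt_mul hα.le]
      congr 1
      field_simp
    have h2 : (2:ℝ) ≤ Real.sqrt (2*π) := by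
      nlinarith [Real.sq_sqrt (by positivity : (0:ℝ) ≤ 2*π), Real.sqrt_nonneg (2*π),
        Real.pi_gt_three]
    nlinarith [h1, h2]
  rw [gamma_eq α hα]
  calc α ^ α * Real.exp (-α)
      ≤ (α ^ α * Real.exp (-α)) * (α ^ ((1:ℝ)/2) * (Real.sqrt (π/(α/2)) / 2)) :=
        le_mul_of_one_le_right (by positivity) key
    _ = α ^ ((1:ℝ)/2) * (α ^ α * (Real.exp (-α) * (Real.sqrt (π/(α/2)) / 2))) := by ring
    _ ≤ α ^ ((1:ℝ)/2) * (α ^ α * ∫ u in Set.Ioi (0:ℝ), Real.exp (-(α*u)) * u ^ (α-1)) := by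
        apply mul_le_mul_of_nonneg_left _ hhalf.le
        exact mul_le_mul_of_nonneg_left (int_lb α hα) hpow.le

lemma log_le_small {s : ℝ} (h0 : 0 ≤ s) (h1 : s ≤ 1) : Real.log (1+s) ≤ s - s^2/4 := by
  have hx : 0 ≤ s - s^2/4 := by nlinarith
  have hsum := Real.sum_le_exp_of_nonneg hx 3
  have hexp : 1 + s ≤ Real.exp (s - s^2/4) := by
    have h2 : (1:ℝ) + (s - s^2/4) + (s - s^2/4)^2/2 ≤ Real.exp (s - s^2/4) := by
      refine le_trans (le_of_eq ?_) hsum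
      simp [Finset.sum_range_succ, Nat.factorial]
    nlinarith
  calc Real.log (1+s) ≤ Real.log (Real.exp (s - s^2/4)) :=
        Real.log_le_log (by linarith) hexp
    _ = s - s^2/4 := Real.log_exp _

lemma log_le_big {s : ℝ} (h1 : 1 ≤ s) : Real.log (1+s) ≤ 3*s/4 := by
  have hEpos : (0:ℝ) < Real.exp 1 := Real.exp_pos 1
  have he : Real.log (1+s) ≤ (1+s) / Real.exp 1 := by
    have h := Real.log_le_sub_one_of_pos (x := (1+s)/Real.exp 1) (by positivity)
    rw [Real.log_div (by linarith) (Real.exp_ne_zero 1), Real.log_exp] at h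
    linarith
  have hE : (2.7182818283 : ℝ) < Real.exp 1 := Real.exp_one_gt_d9
  refine he.trans ?_
  rw [div_le_iff₀ hEpos]
  nlinarith

lemma exp_split {α s : ℝ} (hα : 0 < α) (hs : 0 < s) :
    Real.exp (-α * (s - Real.log (1+s)))
      ≤ Real.exp (-(α/4) * s^2) + Real.exp (-(α/4) * s) := by
  rcases le_or_gt s 1 with h | h
  · have hl := log_le_small hs.le h
    have : Real.exp (-α * (s - Real.log (1+s))) ≤ Real.exp (-(α/4) * s^2) := by
      rw [Real.exp_le_exp]; nlinarith
    linarith [Real.exp_pos (-(α/4) * s)]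
  · have hl := log_le_big h.le
    have : Real.exp (-α * (s - Real.log (1+s))) ≤ Real.exp (-(α/4) * s) := by
      rw [Real.exp_le_exp]; nlinarith
    linarith [Real.exp_pos (-(α/4) * s^2)]

lemma key_pt (α Δ t : ℝ) (hα : 0 < α) (hΔ : 0 < Δ) (ht : 1 ≤ t) :
    Δ * ((α ^ α * Real.exp (-α) / Real.Gamma α) * (1 / (1 + Δ * t)) *
        Real.exp (-α * (Δ * t - Real.log (1 + Δ * t))))
      ≤ α ^ ((1:ℝ)/2) * Δ * Real.exp (-(t^2 / 4) * (α ^ ((1:ℝ)/2) * Δ)^2)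
        + (α * Δ) ^ ((1:ℝ)/2) * Real.exp (-(t / 4) * (α * Δ)) := by
  have hGamma : (0:ℝ) < Real.Gamma α := Real.Gamma_pos_of_pos hα
  have hC : α ^ α * Real.exp (-α) / Real.Gamma α ≤ α ^ ((1:ℝ)/2) := by
    rw [div_le_iff₀ hGamma]; exact gamma_lb α hα
  have hC0 : (0:ℝ) ≤ α ^ α * Real.exp (-α) / Real.Gamma α := by positivity
  have hs : 0 < Δ * t := by nlinarith
  have hsΔ : Δ ≤ Δ * t := by nlinarith
  have hhalf : (0:ℝ) < α ^ ((1:ℝ)/2) := Real.rpow_pos_of_pos hα _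
  -- exponent identities
  have esq : -(t^2 / 4) * (α ^ ((1:ℝ)/2) * Δ)^2 = -(α/4) * (Δ*t)^2 := by
    have h2 : (α ^ ((1:ℝ)/2))^2 = α := by
      rw [← Real.sqrt_eq_rpow, Real.sq_sqrt hα.le]
    rw [mul_pow, h2]; ring
  have elin : -(t / 4) * (α * Δ) = -(α/4) * (Δ*t) := by ring
  rw [esq, elin]
  have hsplit := exp_split hα hs
  -- two coefficient bounds
  have hcoef1 : Δ * ((α ^ α * Real.exp (-α) / Real.Gamma α) * (1 / (1 + Δ * t)))
      ≤ α ^ ((1:ℝ)/2) * Δ := by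
    have h1 : 1 / (1 + Δ * t) ≤ 1 := by
      rw [div_le_one (by linarith)]; linarith
    calc Δ * ((α ^ α * Real.exp (-α) / Real.Gamma α) * (1 / (1 + Δ * t)))
        ≤ Δ * (α ^ ((1:ℝ)/2) * 1) := by
          apply mul_le_mul_of_nonneg_left _ hΔ.le
          exact mul_le_mul hC h1 (by positivity) hhalf.le
      _ = α ^ ((1:ℝ)/2) * Δ := by ring
  have hcoef2 : Δ * ((α ^ α * Real.exp (-α) / Real.Gamma α) * (1 / (1 + Δ * t)))
      ≤ (α * Δ) ^ ((1:ℝ)/2) := by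
    have hmul : (α * Δ) ^ ((1:ℝ)/2) = α ^ ((1:ℝ)/2) * Δ ^ ((1:ℝ)/2) :=
      Real.mul_rpow hα.le hΔ.le
    have h1 : 1 / (1 + Δ * t) ≤ 1 / (1 + Δ) := by
      apply div_le_div_of_nonneg_left one_pos.le (by linarith) (by linarith)  -- check name
    have hΔh : Δ / (1 + Δ) ≤ Δ ^ ((1:ℝ)/2) := by
      rw [← Real.sqrt_eq_rpow, div_le_iff₀ (by linarith : (0:ℝ) < 1 + Δ)]
      nlinarith [Real.sq_sqrt hΔ.le, Real.sqrt_nonneg Δ, sq_nonneg (1 - Real.sqrt Δ)]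
    calc Δ * ((α ^ α * Real.exp (-α) / Real.Gamma α) * (1 / (1 + Δ * t)))
        ≤ Δ * (α ^ ((1:ℝ)/2) * (1 / (1 + Δ))) := by
          apply mul_le_mul_of_nonneg_left _ hΔ.le
          exact mul_le_mul hC h1 (by positivity) hhalf.le
      _ = α ^ ((1:ℝ)/2) * (Δ / (1 + Δ)) := by ring
      _ ≤ α ^ ((1:ℝ)/2) * Δ ^ ((1:ℝ)/2) := mul_le_mul_of_nonneg_left hΔh hhalf.le
      _ = (α * Δ) ^ ((1:ℝ)/2) := hmul.symm
  set C := α ^ α * Real.exp (-α) / Real.Gamma α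
  calc Δ * (C * (1 / (1 + Δ * t)) * Real.exp (-α * (Δ * t - Real.log (1 + Δ * t))))
      ≤ Δ * (C * (1 / (1 + Δ * t)) * (Real.exp (-(α/4) * (Δ*t)^2) + Real.exp (-(α/4) * (Δ*t)))) := by
        apply mul_le_mul_of_nonneg_left _ hΔ.le
        apply mul_le_mul_of_nonneg_left hsplit
        positivity
    _ = Δ * (C * (1 / (1 + Δ * t))) * Real.exp (-(α/4) * (Δ*t)^2)
        + Δ * (C * (1 / (1 + Δ * t))) * Real.exp (-(α/4) * (Δ*t)) := by ring
    _ ≤ α ^ ((1:ℝ)/2) * Δ * Real.exp (-(α/4) * (Δ*t)^2)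
        + (α * Δ) ^ ((1:ℝ)/2) * Real.exp (-(α/4) * (Δ*t)) := by
        apply add_le_add
        · exact mul_le_mul_of_nonneg_right hcoef1 (Real.exp_pos _).le
        · exact mul_le_mul_of_nonneg_right hcoef2 (Real.exp_pos _).le

lemma inv_image (Δ : ℝ) (hΔ : 0 < Δ) :
    (fun s : ℝ => (1+s)⁻¹) '' (Set.Ioi Δ) = Set.Ioo 0 (1/(1+Δ)) := by
  ext u
  constructor
  · rintro ⟨s, hs, rfl⟩
    rw [Set.mem_Ioi] at hs
    have h1 : (0:ℝ) < 1 + Δ := by linarith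
    have h2 : (0:ℝ) < 1 + s := by linarith
    refine ⟨by positivity, ?_⟩
    rw [one_div]
    exact inv_strictAnti₀ h1 (by linarith)
  · rintro ⟨h0, h1⟩
    have hΔ1 : (0:ℝ) < 1 + Δ := by linarith
    refine ⟨u⁻¹ - 1, ?_, ?_⟩
    · rw [Set.mem_Ioi]
      have : 1 + Δ < u⁻¹ := by
        rw [one_div] at h1
        calc 1 + Δ = ((1+Δ)⁻¹)⁻¹ := by rw [inv_inv]
          _ < u⁻¹ := inv_strictAnti₀ h0 h1
      linarith
    · simp

lemma part1 (α Δ : ℝ) (hα : 0 < α) (hΔ : 0 < Δ) :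
    (∫ u in Set.Ioo (0 : ℝ) (1 / (1 + Δ)),
        (α ^ α / Real.Gamma α) * Real.exp (-α / u) / u ^ (1 + α))
      = (∫ s in Set.Ioi Δ,
          (α ^ α * Real.exp (-α) / Real.Gamma α) * (1 / (1 + s)) *
            Real.exp (-α * (s - Real.log (1 + s)))) := by
  rw [← inv_image Δ hΔ,
    integral_image_eq_integral_abs_deriv_smul measurableSet_Ioi
      (f' := fun s : ℝ => -1 / (1+s)^2)
      (fun s hs => by
        rw [Set.mem_Ioi] at hs
        have h2 : (1:ℝ) + s ≠ 0 := by nlinarith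
        exact (((hasDerivAt_id s).const_add 1).inv h2).hasDerivWithinAt)
      (fun s hs t ht h => by
        have := inv_injective h
        linarith [this]) _]
  refine setIntegral_congr_fun measurableSet_Ioi fun s hs => ?_
  rw [Set.mem_Ioi] at hs
  have hy : (0:ℝ) < 1 + s := by linarith
  have hGamma : (0:ℝ) < Real.Gamma α := Real.Gamma_pos_of_pos hα
  have e1 : -α / (1+s)⁻¹ = -α + -α * s := by field_simp; ring
  have e2 : ((1+s)⁻¹ : ℝ) ^ (1 + α) = ((1+s) ^ ((1:ℝ) + α))⁻¹ := Real.inv_rpow hy.le _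
  have e3 : (1+s : ℝ) ^ ((1:ℝ) + α) = (1+s) * Real.exp (Real.log (1+s) * α) := by
    rw [Real.rpow_add hy, Real.rpow_one, Real.rpow_def_of_pos hy]
  have e4 : -α * (s - Real.log (1+s)) = (-α * s) + Real.log (1+s) * α := by ring
  rw [smul_eq_mul, neg_div, abs_neg, abs_of_nonneg (by positivity : (0:ℝ) ≤ 1/(1+s)^2),
    e1, e2, e3, e4, Real.exp_add, Real.exp_add]
  have hexp1 : (0:ℝ) < Real.exp (Real.log (1+s) * α) := Real.exp_pos _
  field_simp

lemma part2 (α Δ : ℝ) (hα : 0 < α) (hΔ : 0 < Δ) :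
    (∫ s in Set.Ioi Δ,
          (α ^ α * Real.exp (-α) / Real.Gamma α) * (1 / (1 + s)) *
            Real.exp (-α * (s - Real.log (1 + s))))
      ≤ (∫ t in Set.Ioi (1 : ℝ),
            α ^ (1/2 : ℝ) * Δ * Real.exp (-(t^2 / 4) * (α ^ (1/2 : ℝ) * Δ)^2))
        + ∫ t in Set.Ioi (1 : ℝ),
            (α * Δ) ^ (1/2 : ℝ) * Real.exp (-(t / 4) * (α * Δ)) := by
  have hGamma : (0:ℝ) < Real.Gamma α := Real.Gamma_pos_of_pos hα
  set C := α ^ α * Real.exp (-α) / Real.Gamma α with hCdef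
  have hC0 : (0:ℝ) ≤ C := by positivity
  set F : ℝ → ℝ := fun s => C * (1 / (1 + s)) * Real.exp (-α * (s - Real.log (1 + s))) with hF
  -- scaling
  have hscale : ∫ s in Set.Ioi Δ, F s = ∫ t in Set.Ioi (1:ℝ), Δ * F (Δ * t) := by
    have h := integral_comp_mul_left_Ioi F 1 hΔ
    rw [mul_one] at h
    rw [MeasureTheory.integral_const_mul]
    rw [h, smul_eq_mul, ← mul_assoc, mul_inv_cancel₀ hΔ.ne', one_mul]
  rw [hscale]
  -- integrability of the two majorants
  have hb1 : (0:ℝ) < (α ^ ((1:ℝ)/2) * Δ)^2 / 4 := by positivity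
  have hint1 : IntegrableOn
      (fun t : ℝ => α ^ (1/2 : ℝ) * Δ * Real.exp (-(t^2 / 4) * (α ^ (1/2 : ℝ) * Δ)^2))
      (Set.Ioi 1) := by
    refine IntegrableOn.congr_fun
      (((integrable_exp_neg_mul_sq hb1).const_mul (α ^ (1/2 : ℝ) * Δ)).integrableOn)
      (fun t _ => ?_) measurableSet_Ioi
    rw [show -((α ^ ((1:ℝ)/2) * Δ)^2 / 4) * t^2 = -(t^2/4) * (α ^ ((1:ℝ)/2) * Δ)^2 by ring]
  have hb2 : (0:ℝ) < α * Δ / 4 := by positivity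
  have hint2 : IntegrableOn
      (fun t : ℝ => (α * Δ) ^ (1/2 : ℝ) * Real.exp (-(t / 4) * (α * Δ)))
      (Set.Ioi 1) := by
    refine IntegrableOn.congr_fun
      (((exp_neg_integrableOn_Ioi 1 hb2).const_mul ((α * Δ) ^ (1/2 : ℝ))))
      (fun t _ => ?_) measurableSet_Ioi
    rw [show -(α * Δ / 4) * t = -(t/4) * (α * Δ) by ring]
  have hintsum := hint1.add hint2
  -- integrability of LHS by domination
  have hmeas : AEStronglyMeasurable (fun t : ℝ => Δ * F (Δ * t))
      (volume.restrict (Set.Ioi 1)) := by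
    apply ContinuousOn.aestronglyMeasurable _ measurableSet_Ioi
    apply ContinuousOn.mul continuousOn_const
    apply ContinuousOn.mul
    · apply ContinuousOn.mul continuousOn_const
      apply ContinuousOn.div continuousOn_const
      · fun_prop
      · intro t ht
        rw [Set.mem_Ioi] at ht; nlinarith
    · apply ContinuousOn.rexp
      apply ContinuousOn.mul continuousOn_const
      apply ContinuousOn.sub (by fun_prop)
      apply ContinuousOn.log (by fun_prop)
      intro t ht
      rw [Set.mem_Ioi] at ht; nlinarith
  have hFnonneg : ∀ t : ℝ, t ∈ Set.Ioi (1:ℝ) → 0 ≤ Δ * F (Δ * t) := by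
    intro t ht
    rw [Set.mem_Ioi] at ht
    have : (0:ℝ) < 1 + Δ * t := by nlinarith
    rw [hF]
    positivity
  have hintF : IntegrableOn (fun t : ℝ => Δ * F (Δ * t)) (Set.Ioi 1) := by
    apply Integrable.mono hintsum hmeas
    filter_upwards [ae_restrict_mem measurableSet_Ioi] with t ht
    rw [Real.norm_of_nonneg (hFnonneg t ht)]
    have hb := key_pt α Δ t hα hΔ (le_of_lt ht)
    have hnn : 0 ≤ α ^ (1/2 : ℝ) * Δ * Real.exp (-(t^2 / 4) * (α ^ (1/2 : ℝ) * Δ)^2)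
        + (α * Δ) ^ (1/2 : ℝ) * Real.exp (-(t / 4) * (α * Δ)) := by positivity
    exact hb.trans (le_of_eq (Real.norm_of_nonneg hnn).symm)
  calc ∫ t in Set.Ioi (1:ℝ), Δ * F (Δ * t)
      ≤ ∫ t in Set.Ioi (1:ℝ),
          (α ^ (1/2 : ℝ) * Δ * Real.exp (-(t^2 / 4) * (α ^ (1/2 : ℝ) * Δ)^2)
            + (α * Δ) ^ (1/2 : ℝ) * Real.exp (-(t / 4) * (α * Δ))) := by
        refine setIntegral_mono_on hintF hintsum measurableSet_Ioi ?_
        intro t ht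
        rw [Set.mem_Ioi] at ht
        exact key_pt α Δ t hα hΔ ht.le
    _ = _ := integral_add hint1 hint2

theorem stmt_9 (α Δ : ℝ) (hα : 0 < α) (hΔ : 0 < Δ) :
    (∫ u in Set.Ioo (0 : ℝ) (1 / (1 + Δ)),
        (α ^ α / Real.Gamma α) * Real.exp (-α / u) / u ^ (1 + α))
      = (∫ s in Set.Ioi Δ,
          (α ^ α * Real.exp (-α) / Real.Gamma α) * (1 / (1 + s)) *
            Real.exp (-α * (s - Real.log (1 + s)))) ∧
    (∫ u in Set.Ioo (0 : ℝ) (1 / (1 + Δ)),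
        (α ^ α / Real.Gamma α) * Real.exp (-α / u) / u ^ (1 + α))
      ≤ (∫ t in Set.Ioi (1 : ℝ),
            α ^ (1/2 : ℝ) * Δ * Real.exp (-(t^2 / 4) * (α ^ (1/2 : ℝ) * Δ)^2))
        + ∫ t in Set.Ioi (1 : ℝ),
            (α * Δ) ^ (1/2 : ℝ) * Real.exp (-(t / 4) * (α * Δ)) := by
  constructor
  · exact part1 α Δ hα hΔ
  · rw [part1 α Δ hα hΔ]
    exact part2 α Δ hα hΔ
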